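/- Suppose v : Z² → S² ⊂ R³ and d : Z² → R are such that for some nowhere-zero c : Z² → R the map c·(v,1) : Z² → R⁴ satisfies the discrete Moutard equation (c(v,1))₁₂ - c(v,1) = a₁₂((c(v,1))₂ - (c(v,1))₁), and suppose on each elementary quadrilateral the four planes P = {x ∈ R³ : ⟨v,x⟩ = d} meet at a common point x₀ (i.e., ⟨v,x₀⟩ = d, ⟨v₁,x₀⟩ = d₁, ⟨v₂,x₀⟩ = d₂, ⟨v₁₂,x₀⟩ = d₁₂). Then the function cd satisfies the same Moutard equation: (cd)₁₂ - cd = a₁₂((cd)₂ - (cd)₁), and hence c·(v,d,1) : Z² → R⁵ is a T-net. -/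

import Mathlib

/-- If the Gauss map `v` of a net of planes `P = {x : ⟨v,x⟩ = d}` admits a Moutard
lift `c·(v,1)` and on each elementary quadrilateral the four planes meet at a common
point, then `cd` satisfies the same Moutard equation, so `c·(v,d,1)` is a T-net. -/
theorem gauss_map_isothermic_implies_L_isothermic
    (v : ℤ × ℤ → EuclideanSpace ℝ (Fin 3)) (hv : ∀ u, ‖v u‖ = 1)
    (d : ℤ × ℤ → ℝ) (c : ℤ × ℤ → ℝ) (hc : ∀ u, c u ≠ 0)
    (a : ℤ × ℤ → ℝ)
    (hMou : ∀ u : ℤ × ℤ,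
      (c (u.1 + 1, u.2 + 1) • v (u.1 + 1, u.2 + 1), c (u.1 + 1, u.2 + 1)) -
          (c u • v u, c u) =
        a u • ((c (u.1, u.2 + 1) • v (u.1, u.2 + 1), c (u.1, u.2 + 1)) -
          (c (u.1 + 1, u.2) • v (u.1 + 1, u.2), c (u.1 + 1, u.2))))
    (hconc : ∀ u : ℤ × ℤ, ∃ x₀ : EuclideanSpace ℝ (Fin 3),
      (inner ℝ (v u) x₀ : ℝ) = d u ∧
      (inner ℝ (v (u.1 + 1, u.2)) x₀ : ℝ) = d (u.1 + 1, u.2) ∧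
      (inner ℝ (v (u.1, u.2 + 1)) x₀ : ℝ) = d (u.1, u.2 + 1) ∧
      (inner ℝ (v (u.1 + 1, u.2 + 1)) x₀ : ℝ) = d (u.1 + 1, u.2 + 1)) :
    (∀ u : ℤ × ℤ,
      c (u.1 + 1, u.2 + 1) * d (u.1 + 1, u.2 + 1) - c u * d u =
        a u * (c (u.1, u.2 + 1) * d (u.1, u.2 + 1) -
          c (u.1 + 1, u.2) * d (u.1 + 1, u.2))) ∧
    (∀ u : ℤ × ℤ,
      (c (u.1 + 1, u.2 + 1) • v (u.1 + 1, u.2 + 1),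
          c (u.1 + 1, u.2 + 1) * d (u.1 + 1, u.2 + 1), c (u.1 + 1, u.2 + 1)) -
        (c u • v u, c u * d u, c u) =
      a u • ((c (u.1, u.2 + 1) • v (u.1, u.2 + 1),
          c (u.1, u.2 + 1) * d (u.1, u.2 + 1), c (u.1, u.2 + 1)) -
        (c (u.1 + 1, u.2) • v (u.1 + 1, u.2),
          c (u.1 + 1, u.2) * d (u.1 + 1, u.2), c (u.1 + 1, u.2)))) := by
  have key : ∀ u : ℤ × ℤ,
      c (u.1 + 1, u.2 + 1) * d (u.1 + 1, u.2 + 1) - c u * d u =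
        a u * (c (u.1, u.2 + 1) * d (u.1, u.2 + 1) -
          c (u.1 + 1, u.2) * d (u.1 + 1, u.2)) := by
    intro u
    obtain ⟨x₀, h0, h1, h2, h12⟩ := hconc u
    have hvec : c (u.1 + 1, u.2 + 1) • v (u.1 + 1, u.2 + 1) - c u • v u =
        a u • (c (u.1, u.2 + 1) • v (u.1, u.2 + 1) -
          c (u.1 + 1, u.2) • v (u.1 + 1, u.2)) :=
      congrArg Prod.fst (hMou u)
    have := congrArg (fun w : EuclideanSpace ℝ (Fin 3) => (inner ℝ w x₀ : ℝ)) hvec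
    simpa [inner_sub_left, inner_smul_left, real_inner_smul_left,
      h0, h1, h2, h12, mul_sub] using this
  refine ⟨key, fun u => ?_⟩
  have h1 : c (u.1 + 1, u.2 + 1) • v (u.1 + 1, u.2 + 1) - c u • v u =
      a u • (c (u.1, u.2 + 1) • v (u.1, u.2 + 1) -
        c (u.1 + 1, u.2) • v (u.1 + 1, u.2)) := congrArg Prod.fst (hMou u)
  have h3 : c (u.1 + 1, u.2 + 1) - c u =
      a u * (c (u.1, u.2 + 1) - c (u.1 + 1, u.2)) := by
    simpa using congrArg Prod.snd (hMou u)
  have h2 := key u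
  ext <;> simp_all [Prod.smul_def, smul_sub, mul_sub]
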